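/- The 2-form Ω = ∑ τ_i J_i dQ_i ∧ dq_i is preserved by the discrete Neumann map: for the map Φ(q,Q) = (Q, λ(q,Q)J^{-1}Q − q) with λ(q,Q) = 2⟨J^{-1}Q,q⟩/⟨J^{-2}Q,Q⟩, defined on the open set of P_c = {⟨q,q⟩=c, ⟨Q,Q⟩=c} where ⟨J^{-2}Q,Q⟩ ≠ 0, the pullback Φ*Ω restricted to the tangent spaces of P_c equals Ω restricted to P_c. -/

import Mathlib

open Finset


lemma stmt19_aux (n : ℕ) (τ J : Fin n → ℝ) (hJ : ∀ i, J i ≠ 0)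
    (x2 u1 u2 v1 v2 : Fin n → ℝ) (a b l : ℝ)
    (hu : ∑ i, τ i * x2 i * u2 i = 0) (hv : ∑ i, τ i * x2 i * v2 i = 0) :
    ∑ i, τ i * J i * ((a * ((J i)⁻¹ * x2 i) + l * ((J i)⁻¹ * u2 i) - u1 i) * v2 i
        - (b * ((J i)⁻¹ * x2 i) + l * ((J i)⁻¹ * v2 i) - v1 i) * u2 i)
      = ∑ i, τ i * J i * (u2 i * v1 i - v2 i * u1 i) := by
  have key : ∀ i, τ i * J i * ((a * ((J i)⁻¹ * x2 i) + l * ((J i)⁻¹ * u2 i) - u1 i) * v2 i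
        - (b * ((J i)⁻¹ * x2 i) + l * ((J i)⁻¹ * v2 i) - v1 i) * u2 i)
      = a * (τ i * x2 i * v2 i) - b * (τ i * x2 i * u2 i)
        + τ i * J i * (u2 i * v1 i - v2 i * u1 i) := by
    intro i
    field_simp [hJ i]
    ring
  rw [Finset.sum_congr rfl fun i _ => key i, Finset.sum_add_distrib,
    Finset.sum_sub_distrib, ← Finset.mul_sum, ← Finset.mul_sum, hu, hv]
  ring

theorem stmt19 (n : ℕ) (τ J : Fin n → ℝ)
    (hτ : ∀ i, τ i = 1 ∨ τ i = -1) (hJ : ∀ i, J i ≠ 0)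
    (c : ℝ) (hc : c = -1 ∨ c = 0 ∨ c = 1)
    (Φ : (Fin n → ℝ) × (Fin n → ℝ) → (Fin n → ℝ) × (Fin n → ℝ))
    (hΦ : ∀ x, Φ x = (x.2, fun i =>
      (2 * (∑ i, τ i * (J i)⁻¹ * x.2 i * x.1 i) /
        (∑ i, τ i * ((J i)⁻¹)^2 * x.2 i * x.2 i)) * (J i)⁻¹ * x.2 i - x.1 i))
    (Ω : ((Fin n → ℝ) × (Fin n → ℝ)) → ((Fin n → ℝ) × (Fin n → ℝ)) → ℝ)
    (hΩ : ∀ u v, Ω u v = ∑ i, τ i * J i * (u.2 i * v.1 i - v.2 i * u.1 i))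
    (x : (Fin n → ℝ) × (Fin n → ℝ))
    (hx1 : ∑ i, τ i * x.1 i * x.1 i = c)
    (hx2 : ∑ i, τ i * x.2 i * x.2 i = c)
    (hden : ∑ i, τ i * ((J i)⁻¹)^2 * x.2 i * x.2 i ≠ 0) :
    ∀ u v : (Fin n → ℝ) × (Fin n → ℝ),
      (∑ i, τ i * x.1 i * u.1 i = 0) → (∑ i, τ i * x.2 i * u.2 i = 0) →
      (∑ i, τ i * x.1 i * v.1 i = 0) → (∑ i, τ i * x.2 i * v.2 i = 0) →
      Ω (fderiv ℝ Φ x u) (fderiv ℝ Φ x v) = Ω u v := by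
  intro u v hu1 hu2 hv1 hv2
  classical
  have e1h : ∀ i : Fin n, HasFDerivAt (fun p : (Fin n → ℝ) × (Fin n → ℝ) => p.1 i)
      ((ContinuousLinearMap.proj i).comp (ContinuousLinearMap.fst ℝ (Fin n → ℝ) (Fin n → ℝ))) x :=
    fun i => ((ContinuousLinearMap.proj i).comp (ContinuousLinearMap.fst ℝ (Fin n → ℝ) (Fin n → ℝ))).hasFDerivAt
  have e2h : ∀ i : Fin n, HasFDerivAt (fun p : (Fin n → ℝ) × (Fin n → ℝ) => p.2 i)
      ((ContinuousLinearMap.proj i).comp (ContinuousLinearMap.snd ℝ (Fin n → ℝ) (Fin n → ℝ))) x :=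
    fun i => ((ContinuousLinearMap.proj i).comp (ContinuousLinearMap.snd ℝ (Fin n → ℝ) (Fin n → ℝ))).hasFDerivAt
  have hN := HasFDerivAt.fun_sum (u := Finset.univ)
    (fun (i : Fin n) (_ : i ∈ Finset.univ) => ((e2h i).const_mul (τ i * (J i)⁻¹)).fun_mul (e1h i))
  have hD := HasFDerivAt.fun_sum (u := Finset.univ)
    (fun (i : Fin n) (_ : i ∈ Finset.univ) => ((e2h i).const_mul (τ i * ((J i)⁻¹)^2)).fun_mul (e2h i))
  have hDinv := (hasFDerivAt_inv hden).comp x hD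
  have hlam := (hN.const_mul (2:ℝ)).fun_mul hDinv
  have hK : HasFDerivAt (fun p : (Fin n → ℝ) × (Fin n → ℝ) => fun i => (J i)⁻¹ * p.2 i)
      ((ContinuousLinearMap.pi fun i : Fin n => (J i)⁻¹ • ContinuousLinearMap.proj i).comp
        (ContinuousLinearMap.snd ℝ (Fin n → ℝ) (Fin n → ℝ))) x :=
    ((ContinuousLinearMap.pi fun i : Fin n => (J i)⁻¹ • ContinuousLinearMap.proj i).comp
        (ContinuousLinearMap.snd ℝ (Fin n → ℝ) (Fin n → ℝ))).hasFDerivAt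
  have hfst : HasFDerivAt (fun p : (Fin n → ℝ) × (Fin n → ℝ) => p.1)
      (ContinuousLinearMap.fst ℝ (Fin n → ℝ) (Fin n → ℝ)) x :=
    (ContinuousLinearMap.fst ℝ (Fin n → ℝ) (Fin n → ℝ)).hasFDerivAt
  have hsnd : HasFDerivAt (fun p : (Fin n → ℝ) × (Fin n → ℝ) => p.2)
      (ContinuousLinearMap.snd ℝ (Fin n → ℝ) (Fin n → ℝ)) x :=
    (ContinuousLinearMap.snd ℝ (Fin n → ℝ) (Fin n → ℝ)).hasFDerivAt
  have hd := HasFDerivAt.prodMk hsnd ((hlam.fun_smul hK).fun_sub hfst)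
  have hΦd : HasFDerivAt Φ _ x := hd.congr_of_eventuallyEq (Filter.Eventually.of_forall (fun p => by
    rw [hΦ p]
    refine Prod.ext rfl ?_
    funext i
    simp only [Function.comp, Pi.sub_apply, Pi.smul_apply, smul_eq_mul]
    ring))
  have hfd := hΦd.fderiv
  set A : (Fin n → ℝ) × (Fin n → ℝ) → ℝ := fun w =>
    (2 * ∑ j, τ j * (J j)⁻¹ * x.2 j * x.1 j) *
        ((∑ j, (τ j * (J j)⁻¹ ^ 2 * x.2 j * w.2 j + x.2 j * (τ j * (J j)⁻¹ ^ 2 * w.2 j))) *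
          -((∑ j, τ j * (J j)⁻¹ ^ 2 * x.2 j * x.2 j) ^ 2)⁻¹) +
      (∑ j, τ j * (J j)⁻¹ ^ 2 * x.2 j * x.2 j)⁻¹ *
        (2 * ∑ j, (τ j * (J j)⁻¹ * x.2 j * w.1 j + x.1 j * (τ j * (J j)⁻¹ * w.2 j))) with hA
  set l : ℝ := (2 * ∑ j, τ j * (J j)⁻¹ * x.2 j * x.1 j) *
      (∑ j, τ j * (J j)⁻¹ ^ 2 * x.2 j * x.2 j)⁻¹ with hl
  have hLw : ∀ w : (Fin n → ℝ) × (Fin n → ℝ), (fderiv ℝ Φ x) w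
      = (w.2, fun i => A w * ((J i)⁻¹ * x.2 i) + l * ((J i)⁻¹ * w.2 i) - w.1 i) := by
    intro w
    rw [hfd]
    refine Prod.ext (by simp) ?_
    funext i
    simp only [ContinuousLinearMap.prod_apply, ContinuousLinearMap.sub_apply,
      ContinuousLinearMap.add_apply, ContinuousLinearMap.smul_apply,
      ContinuousLinearMap.smulRight_apply, ContinuousLinearMap.comp_apply,
      ContinuousLinearMap.coe_fst', ContinuousLinearMap.coe_snd',
      ContinuousLinearMap.proj_apply, ContinuousLinearMap.pi_apply,
      ContinuousLinearMap.sum_apply, ContinuousLinearMap.one_apply,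
      ContinuousLinearMap.coe_smul', Pi.sub_apply, Pi.smul_apply, Pi.add_apply,
      ContinuousLinearMap.toSpanSingleton_apply,
      smul_eq_mul, Function.comp, hA, hl]
    ring
  rw [hΩ, hΩ, hLw u, hLw v]
  exact stmt19_aux n τ J hJ x.2 u.1 u.2 v.1 v.2 (A u) (A v) l hu2 hv2
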